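/- Assume: (i) the gradient operator of the modified 4-player game is α-strongly monotone on Z for every payoff pair; (ii) each D_i is symmetric, satisfies the triangle inequality, and satisfies D_i(x, y) ≤ L‖x − y‖₂ on the relevant simplex; (iii) ρ is a map assigning to every payoff pair R a Nash equilibrium ρ(R) of the modified 4-player game with payoff pair R, and RQE_i(R) := J_i(ρ(R); R). Let S be a nonempty finite set, let r₁, r₂ : S × (A₁ × A₂) → ℝ where |A₁| = a₁ and |A₂| = a₂, let P : S × (A₁ × A₂) → Δ_S, let D₁^env, D₂^env : Δ_S × Δ_S → ℝ be bounded below, and let γ ∈ [0, 1). For a pair Q = (Q₁, Q₂) with Q_i : S × (A₁ × A₂) → ℝ, viewing (Q₁(s, ·), Q₂(s, ·)) as a payoff pair (with Q₂(s,·) transposed appropriately), define the risk-averse quantal-response Bellman operator (T Q)_i(s, a) = r_i(s, a) + γ·inf_{P̃ ∈ Δ_S} { −Σ_{s'} P̃(s')·RQE_i(Q(s', ·)) + D_i^env(P̃, P(· | s, a)) }. Then for all pairs Q, Q': ‖T Q − T Q'‖_∞ ≤ γ·(1 + 2L(√a₁ + √a₂)/α)·‖Q − Q'‖_∞, where ‖·‖_∞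 is the maximum of absolute values over i, s and joint actions a. In particular, if γ ≤ α/(α + 2L(√a₁ + √a₂)) then ‖T Q − T Q'‖_∞ ≤ ‖Q − Q'‖_∞, and T is a contraction whenever this inequality on γ is strict. -/

import Mathlib

noncomputable section

/-- `ℝⁿ` with the Euclidean norm. -/
abbrev Vec (n : ℕ) := EuclideanSpace ℝ (Fin n)

/-- The standard simplex `Δₙ = {x : xⱼ ≥ 0, ∑ⱼ xⱼ = 1}`. -/
def Δ (n : ℕ) : Set (Vec n) := {x | (∀ j, 0 ≤ x j) ∧ ∑ j, x j = 1}

/-- Matrix–vector product `M x`. -/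
def mv {m n : ℕ} (M : Matrix (Fin m) (Fin n) ℝ) (x : Vec n) : Vec m :=
  WithLp.toLp 2 (fun k => ∑ j, M k j * x j)

/-- Joint strategy space of the modified 4-player game: `z = (π₁, π₂, p₁, p₂)`. -/
abbrev Joint (a₁ a₂ : ℕ) := Vec a₁ × Vec a₂ × Vec a₂ × Vec a₁

/-- Membership in `Z = Δ_{a₁} × Δ_{a₂} × Δ_{a₂} × Δ_{a₁}`. -/
def inZ {a₁ a₂ : ℕ} (z : Joint a₁ a₂) : Prop :=
  z.1 ∈ Δ a₁ ∧ z.2.1 ∈ Δ a₂ ∧ z.2.2.1 ∈ Δ a₂ ∧ z.2.2.2 ∈ Δ a₁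

/-- The standard inner product on the joint space. -/
def jip {a₁ a₂ : ℕ} (z w : Joint a₁ a₂) : ℝ :=
  (inner ℝ z.1 w.1 : ℝ) + (inner ℝ z.2.1 w.2.1 : ℝ)
    + (inner ℝ z.2.2.1 w.2.2.1 : ℝ) + (inner ℝ z.2.2.2 w.2.2.2 : ℝ)

/-- The squared Euclidean norm on the joint space. -/
def jnormSq {a₁ a₂ : ℕ} (z : Joint a₁ a₂) : ℝ :=
  ‖z.1‖ ^ 2 + ‖z.2.1‖ ^ 2 + ‖z.2.2.1‖ ^ 2 + ‖z.2.2.2‖ ^ 2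

/-- Objective `J₁(z; R) = −π₁ᵀ R₁ p₁ − D₁(p₁, π₂) + ε₁ ν₁(π₁)` of player 1. -/
def J1 {a₁ a₂ : ℕ} (ε₁ : ℝ) (ν₁ : Vec a₁ → ℝ) (D₁ : Vec a₂ → Vec a₂ → ℝ)
    (R₁ : Matrix (Fin a₁) (Fin a₂) ℝ) (z : Joint a₁ a₂) : ℝ :=
  -(inner ℝ z.1 (mv R₁ z.2.2.1) : ℝ) - D₁ z.2.2.1 z.2.1 + ε₁ * ν₁ z.1

/-- Objective `J₂(z; R) = −π₂ᵀ R₂ p₂ − D₂(p₂, π₁) + ε₂ ν₂(π₂)` of player 2. -/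
def J2 {a₁ a₂ : ℕ} (ε₂ : ℝ) (ν₂ : Vec a₂ → ℝ) (D₂ : Vec a₁ → Vec a₁ → ℝ)
    (R₂ : Matrix (Fin a₂) (Fin a₁) ℝ) (z : Joint a₁ a₂) : ℝ :=
  -(inner ℝ z.2.1 (mv R₂ z.2.2.2) : ℝ) - D₂ z.2.2.2 z.1 + ε₂ * ν₂ z.2.1

/-- Nash equilibrium of the modified 4-player game: each of the four components minimizes
its owner's objective over its simplex, the others fixed (`J̄ᵢ = −Jᵢ` for the adversaries). -/
def IsNash {a₁ a₂ : ℕ} (ε₁ ε₂ : ℝ) (ν₁ : Vec a₁ → ℝ) (ν₂ : Vec a₂ → ℝ)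
    (D₁ : Vec a₂ → Vec a₂ → ℝ) (D₂ : Vec a₁ → Vec a₁ → ℝ)
    (R₁ : Matrix (Fin a₁) (Fin a₂) ℝ) (R₂ : Matrix (Fin a₂) (Fin a₁) ℝ)
    (z : Joint a₁ a₂) : Prop :=
  inZ z
    ∧ (∀ q ∈ Δ a₁, J1 ε₁ ν₁ D₁ R₁ z ≤ J1 ε₁ ν₁ D₁ R₁ (q, z.2.1, z.2.2.1, z.2.2.2))
    ∧ (∀ q ∈ Δ a₂, J2 ε₂ ν₂ D₂ R₂ z ≤ J2 ε₂ ν₂ D₂ R₂ (z.1, q, z.2.2.1, z.2.2.2))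
    ∧ (∀ q ∈ Δ a₂, -J1 ε₁ ν₁ D₁ R₁ z ≤ -J1 ε₁ ν₁ D₁ R₁ (z.1, z.2.1, q, z.2.2.2))
    ∧ (∀ q ∈ Δ a₁, -J2 ε₂ ν₂ D₂ R₂ z ≤ -J2 ε₂ ν₂ D₂ R₂ (z.1, z.2.1, z.2.2.1, q))

/-- The gradient operator `F(z; R)` of the modified 4-player game. -/
def Fop {a₁ a₂ : ℕ} (ε₁ ε₂ : ℝ) (ν₁ : Vec a₁ → ℝ) (ν₂ : Vec a₂ → ℝ)
    (D₁ : Vec a₂ → Vec a₂ → ℝ) (D₂ : Vec a₁ → Vec a₁ → ℝ)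
    (R₁ : Matrix (Fin a₁) (Fin a₂) ℝ) (R₂ : Matrix (Fin a₂) (Fin a₁) ℝ)
    (z : Joint a₁ a₂) : Joint a₁ a₂ :=
  (-(mv R₁ z.2.2.1) + ε₁ • gradient ν₁ z.1,
   -(mv R₂ z.2.2.2) + ε₂ • gradient ν₂ z.2.1,
   mv R₁.transpose z.1 + gradient (fun p => D₁ p z.2.1) z.2.2.1,
   mv R₂.transpose z.2.1 + gradient (fun p => D₂ p z.1) z.2.2.2)

/-- `α`-strong monotonicity of the gradient operator on `Z`. -/
def StronglyMonotoneOnZ {a₁ a₂ : ℕ} (α ε₁ ε₂ : ℝ) (ν₁ : Vec a₁ → ℝ) (ν₂ : Vec a₂ → ℝ)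
    (D₁ : Vec a₂ → Vec a₂ → ℝ) (D₂ : Vec a₁ → Vec a₁ → ℝ)
    (R₁ : Matrix (Fin a₁) (Fin a₂) ℝ) (R₂ : Matrix (Fin a₂) (Fin a₁) ℝ) : Prop :=
  ∀ z z' : Joint a₁ a₂, inZ z → inZ z' →
    α * jnormSq (z - z')
      ≤ jip (z - z') (Fop ε₁ ε₂ ν₁ ν₂ D₁ D₂ R₁ R₂ z - Fop ε₁ ε₂ ν₁ ν₂ D₁ D₂ R₁ R₂ z')

/-- Strict monotonicity of the gradient operator on `Z`. -/
def StrictlyMonotoneOnZ {a₁ a₂ : ℕ} (ε₁ ε₂ : ℝ) (ν₁ : Vec a₁ → ℝ) (ν₂ : Vec a₂ → ℝ)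
    (D₁ : Vec a₂ → Vec a₂ → ℝ) (D₂ : Vec a₁ → Vec a₁ → ℝ)
    (R₁ : Matrix (Fin a₁) (Fin a₂) ℝ) (R₂ : Matrix (Fin a₂) (Fin a₁) ℝ) : Prop :=
  ∀ z z' : Joint a₁ a₂, inZ z → inZ z' → z ≠ z' →
    0 < jip (z - z') (Fop ε₁ ε₂ ν₁ ν₂ D₁ D₂ R₁ R₂ z - Fop ε₁ ε₂ ν₁ ν₂ D₁ D₂ R₁ R₂ z')

/-- Entrywise `L∞` distance between payoff pairs. -/
def Rdist {a₁ a₂ : ℕ} (R₁ R₁' : Matrix (Fin a₁) (Fin a₂) ℝ)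
    (R₂ R₂' : Matrix (Fin a₂) (Fin a₁) ℝ) : ℝ :=
  max (⨆ kj : Fin a₁ × Fin a₂, |R₁ kj.1 kj.2 - R₁' kj.1 kj.2|)
      (⨆ kj : Fin a₂ × Fin a₁, |R₂ kj.1 kj.2 - R₂' kj.1 kj.2|)

/-- Payoff matrix of player 1 extracted from the `Q`-function pair at state `s`. -/
def QtoR1 {a₁ a₂ : ℕ} {S : Type*}
    (Q : (S × (Fin a₁ × Fin a₂) → ℝ) × (S × (Fin a₁ × Fin a₂) → ℝ)) (s : S) :
    Matrix (Fin a₁) (Fin a₂) ℝ :=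
  Matrix.of fun k j => Q.1 (s, (k, j))

/-- Payoff matrix of player 2 (transposed appropriately) extracted from the `Q`-function
pair at state `s`. -/
def QtoR2 {a₁ a₂ : ℕ} {S : Type*}
    (Q : (S × (Fin a₁ × Fin a₂) → ℝ) × (S × (Fin a₁ × Fin a₂) → ℝ)) (s : S) :
    Matrix (Fin a₂) (Fin a₁) ℝ :=
  Matrix.of fun j k => Q.2 (s, (k, j))

/-- The risk-averse quantal-response Bellman operator
`(T Q)ᵢ(s, a) = rᵢ(s, a) + γ · inf_{P̃ ∈ Δ_S} { −∑_{s'} P̃(s') RQEᵢ(Q(s',·)) + Dᵢᵉⁿᵛ(P̃, P(·|s,a)) }`,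
where `RQEᵢ(R) := Jᵢ(ρ(R); R)` for a Nash-equilibrium selector `ρ`. -/
def rqBellman {a₁ a₂ : ℕ} {S : Type*} [Fintype S]
    (ε₁ ε₂ : ℝ) (ν₁ : Vec a₁ → ℝ) (ν₂ : Vec a₂ → ℝ)
    (D₁ : Vec a₂ → Vec a₂ → ℝ) (D₂ : Vec a₁ → Vec a₁ → ℝ)
    (ρ : Matrix (Fin a₁) (Fin a₂) ℝ → Matrix (Fin a₂) (Fin a₁) ℝ → Joint a₁ a₂)
    (γ : ℝ) (r₁ r₂ : S × (Fin a₁ × Fin a₂) → ℝ)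
    (P : S × (Fin a₁ × Fin a₂) → S → ℝ)
    (D₁env D₂env : (S → ℝ) → (S → ℝ) → ℝ)
    (Q : (S × (Fin a₁ × Fin a₂) → ℝ) × (S × (Fin a₁ × Fin a₂) → ℝ)) :
    (S × (Fin a₁ × Fin a₂) → ℝ) × (S × (Fin a₁ × Fin a₂) → ℝ) :=
  (fun sa => r₁ sa + γ * ⨅ Pt : stdSimplex ℝ S,
      (-(∑ s', (Pt : S → ℝ) s' *
            J1 ε₁ ν₁ D₁ (QtoR1 Q s') (ρ (QtoR1 Q s') (QtoR2 Q s')))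
        + D₁env Pt (P sa)),
   fun sa => r₂ sa + γ * ⨅ Pt : stdSimplex ℝ S,
      (-(∑ s', (Pt : S → ℝ) s' *
            J2 ε₂ ν₂ D₂ (QtoR2 Q s') (ρ (QtoR1 Q s') (QtoR2 Q s')))
        + D₂env Pt (P sa)))

open InnerProductSpace
lemma dir_nonneg {n : ℕ} {φ : Vec n → ℝ} {g x : Vec n} (hg : HasGradientAt φ g x) (q : Vec n)
    (hmin : ∀ t : ℝ, 0 ≤ t → t ≤ 1 → φ x ≤ φ (x + t • (q - x))) :
    0 ≤ (inner ℝ g (q - x) : ℝ) := by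
  by_contra h
  push_neg at h
  set u := q - x with hu
  set d : ℝ := (inner ℝ g u : ℝ) with hd
  have hψ : HasDerivAt (fun t : ℝ => φ (x + t • u)) d 0 := by
    have hF : HasFDerivAt φ (toDual ℝ _ g) x := hasGradientAt_iff_hasFDerivAt.1 hg
    have hF' : HasFDerivAt φ (toDual ℝ _ g) (x + (0:ℝ) • u) := by simpa using hF
    have hline : HasDerivAt (fun t : ℝ => x + t • u) u 0 := by
      simpa using ((hasDerivAt_id (0:ℝ)).smul_const u).const_add x
    have := hF'.comp_hasDerivAt 0 hline
    simp only [toDual_apply_apply] at this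
    exact this
  have hslope := hasDerivAt_iff_tendsto_slope.1 hψ
  have hlt : ∀ᶠ t in nhdsWithin (0:ℝ) (Set.Ioi 0), slope (fun t : ℝ => φ (x + t • u)) 0 t < 0 := by
    have : Set.Iio (0:ℝ) ∈ nhds d := Iio_mem_nhds h
    exact (hslope.mono_left (nhdsWithin_mono _ (by intro t ht; exact ne_of_gt ht))).eventually_mem this
  have hIoo : ∀ᶠ t in nhdsWithin (0:ℝ) (Set.Ioi 0), t ∈ Set.Ioo (0:ℝ) 1 :=
    Ioo_mem_nhdsGT_of_mem (by constructor <;> norm_num)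
  obtain ⟨t, hts, htm⟩ := (hlt.and hIoo).exists
  have ht0 : (0:ℝ) < t := htm.1
  have := hmin t (le_of_lt ht0) (le_of_lt htm.2)
  have hψ0 : φ (x + (0:ℝ) • u) = φ x := by simp
  rw [slope_def_field] at hts
  have : (φ (x + t • u) - φ x) / t < 0 := by
    simpa [hψ0] using hts
  rcases div_neg_iff.1 this with ⟨_, h2⟩ | ⟨h1, _⟩ <;> linarith

open InnerProductSpace in
lemma hasGradientAt_inner_const {n : ℕ} (v x : Vec n) :
    HasGradientAt (fun y : Vec n => (inner ℝ v y : ℝ)) v x := by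
  rw [hasGradientAt_iff_hasFDerivAt]
  have : ⇑(toDual ℝ (Vec n) v) = fun y : Vec n => (inner ℝ v y : ℝ) := by
    funext y; exact toDual_apply_apply
  exact this ▸ (toDual ℝ (Vec n) v).hasFDerivAt

open InnerProductSpace in
lemma HasGradientAt.add' {n : ℕ} {f g : Vec n → ℝ} {f' g' : Vec n} {x : Vec n}
    (hf : HasGradientAt f f' x) (hg : HasGradientAt g g' x) :
    HasGradientAt (fun y => f y + g y) (f' + g') x := by
  rw [hasGradientAt_iff_hasFDerivAt] at *
  have := hf.add hg
  rw [map_add]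
  exact this

open InnerProductSpace in
lemma HasGradientAt.constMul {n : ℕ} {f : Vec n → ℝ} {f' : Vec n} {x : Vec n} (c : ℝ)
    (hf : HasGradientAt f f' x) :
    HasGradientAt (fun y => c * f y) (c • f') x := by
  rw [hasGradientAt_iff_hasFDerivAt] at *
  have := hf.const_smul c
  have h2 : (toDual ℝ (Vec n)) (c • f') = c • (toDual ℝ (Vec n)) f' := map_smul _ c f'
  rw [h2]
  exact this

open InnerProductSpace in
lemma HasGradientAt.addConst {n : ℕ} {f : Vec n → ℝ} {f' : Vec n} {x : Vec n} (c : ℝ)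
    (hf : HasGradientAt f f' x) :
    HasGradientAt (fun y => f y + c) f' x := by
  rw [hasGradientAt_iff_hasFDerivAt] at *
  exact hf.add_const c

-- convexity of the simplex
lemma simplex_seg {n : ℕ} {x q : Vec n} (hx : x ∈ Δ n) (hq : q ∈ Δ n) {t : ℝ}
    (h0 : 0 ≤ t) (h1 : t ≤ 1) : x + t • (q - x) ∈ Δ n := by
  obtain ⟨hx0, hx1⟩ := hx
  obtain ⟨hq0, hq1⟩ := hq
  constructor
  · intro j
    have : (x + t • (q - x)) j = (1 - t) * x j + t * q j := by
      simp [PiLp.add_apply, PiLp.smul_apply, PiLp.sub_apply]; ring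
    rw [this]
    have := hx0 j; have := hq0 j
    nlinarith
  · have : ∀ j, (x + t • (q - x)) j = (1 - t) * x j + t * q j := by
      intro j; simp [PiLp.add_apply, PiLp.smul_apply, PiLp.sub_apply]; ring
    simp only [this]
    rw [Finset.sum_add_distrib, ← Finset.mul_sum, ← Finset.mul_sum, hx1, hq1]
    ring

lemma mv_sub {m n : ℕ} (A B : Matrix (Fin m) (Fin n) ℝ) (x : Vec n) :
    mv (A - B) x = mv A x - mv B x := by
  ext k
  simp [mv, PiLp.sub_apply, sub_mul, Finset.sum_sub_distrib]

lemma mv_entry_abs_le {m n : ℕ} {M : Matrix (Fin m) (Fin n) ℝ} {p : Vec n} {δ : ℝ}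
    (hM : ∀ k j, |M k j| ≤ δ) (hp : p ∈ Δ n) (k : Fin m) : |mv M p k| ≤ δ := by
  obtain ⟨hp0, hp1⟩ := hp
  calc |∑ j, M k j * p j| ≤ ∑ j, |M k j * p j| := Finset.abs_sum_le_sum_abs _ _
    _ ≤ ∑ j, δ * p j := by
        apply Finset.sum_le_sum
        intro j _
        rw [abs_mul, abs_of_nonneg (hp0 j)]
        exact mul_le_mul_of_nonneg_right (hM k j) (hp0 j)
    _ = δ := by rw [← Finset.mul_sum, hp1, mul_one]

lemma norm_le_sqrt_card {n : ℕ} {v : Vec n} {c : ℝ} (hc : 0 ≤ c)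
    (h : ∀ k, |v k| ≤ c) : ‖v‖ ≤ Real.sqrt n * c := by
  rw [EuclideanSpace.norm_eq]
  have : ∑ i, ‖v i‖ ^ 2 ≤ n * c ^ 2 := by
    calc ∑ i, ‖v i‖ ^ 2 ≤ ∑ _i : Fin n, c ^ 2 := by
          apply Finset.sum_le_sum
          intro i _
          have := h i
          rw [Real.norm_eq_abs]
          nlinarith [abs_nonneg (v i)]
      _ = n * c ^ 2 := by simp [Finset.sum_const, mul_comm]
  calc Real.sqrt (∑ i, ‖v i‖ ^ 2) ≤ Real.sqrt (n * c ^ 2) := Real.sqrt_le_sqrt this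
    _ = Real.sqrt n * c := by
        rw [Real.sqrt_mul (Nat.cast_nonneg n), Real.sqrt_sq hc]

-- π Q p form bound
lemma quad_abs_le {m n : ℕ} {M : Matrix (Fin m) (Fin n) ℝ} {q : Vec m} {p : Vec n} {δ : ℝ}
    (hM : ∀ k j, |M k j| ≤ δ) (hq : q ∈ Δ m) (hp : p ∈ Δ n) :
    |(inner ℝ q (mv M p) : ℝ)| ≤ δ := by
  obtain ⟨hq0, hq1⟩ := hq
  have hrw : (inner ℝ q (mv M p) : ℝ) = ∑ k, q k * mv M p k := by
    simp [PiLp.inner_apply, RCLike.inner_apply]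
    exact Finset.sum_congr rfl (fun _ _ => mul_comm _ _)
  rw [hrw]
  calc |∑ k, q k * mv M p k| ≤ ∑ k, |q k * mv M p k| := Finset.abs_sum_le_sum_abs _ _
    _ ≤ ∑ k, q k * δ := by
        apply Finset.sum_le_sum
        intro k _
        rw [abs_mul, abs_of_nonneg (hq0 k)]
        exact mul_le_mul_of_nonneg_left (mv_entry_abs_le hM hp k) (hq0 k)
    _ = δ := by rw [← Finset.sum_mul, hq1, one_mul]

lemma inner_mv_comm {m n : ℕ} (M : Matrix (Fin m) (Fin n) ℝ) (x : Vec m) (p : Vec n) :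
    (inner ℝ x (mv M p) : ℝ) = (inner ℝ (mv M.transpose x) p : ℝ) := by
  simp only [PiLp.inner_apply, RCLike.inner_apply, conj_trivial, mv, Matrix.transpose_apply,
    Finset.sum_mul, Finset.mul_sum]
  rw [Finset.sum_comm]
  apply Finset.sum_congr rfl
  intro j _
  apply Finset.sum_congr rfl
  intro k _
  ring

lemma nash_vi {a₁ a₂ : ℕ} {ε₁ ε₂ : ℝ} {ν₁ : Vec a₁ → ℝ} {ν₂ : Vec a₂ → ℝ}
    {D₁ : Vec a₂ → Vec a₂ → ℝ} {D₂ : Vec a₁ → Vec a₁ → ℝ}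
    (hν₁ : Differentiable ℝ ν₁) (hν₂ : Differentiable ℝ ν₂)
    (hD₁ : Differentiable ℝ (fun x : Vec a₂ × Vec a₂ => D₁ x.1 x.2))
    (hD₂ : Differentiable ℝ (fun x : Vec a₁ × Vec a₁ => D₂ x.1 x.2))
    (R₁ : Matrix (Fin a₁) (Fin a₂) ℝ) (R₂ : Matrix (Fin a₂) (Fin a₁) ℝ)
    {z : Joint a₁ a₂} (hz : IsNash ε₁ ε₂ ν₁ ν₂ D₁ D₂ R₁ R₂ z)
    (w : Joint a₁ a₂) (hw : inZ w) :
    0 ≤ jip (w - z) (Fop ε₁ ε₂ ν₁ ν₂ D₁ D₂ R₁ R₂ z) := by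
  obtain ⟨⟨hz1, hz2, hz3, hz4⟩, hN1, hN2, hN3, hN4⟩ := hz
  obtain ⟨hw1, hw2, hw3, hw4⟩ := hw
  -- component 1
  have key1 : 0 ≤ (inner ℝ (-(mv R₁ z.2.2.1) + ε₁ • gradient ν₁ z.1) (w.1 - z.1) : ℝ) := by
    set φ : Vec a₁ → ℝ :=
      fun π => (-1 : ℝ) * (inner ℝ (mv R₁ z.2.2.1) π : ℝ) + -D₁ z.2.2.1 z.2.1 + ε₁ * ν₁ π with hφ
    have hgrad : HasGradientAt φ (-(mv R₁ z.2.2.1) + ε₁ • gradient ν₁ z.1) z.1 := by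
      have ha := HasGradientAt.constMul (-1 : ℝ) (hasGradientAt_inner_const (mv R₁ z.2.2.1) z.1)
      have hb := HasGradientAt.addConst (-D₁ z.2.2.1 z.2.1) ha
      have hc := HasGradientAt.constMul ε₁ ((hν₁ z.1).hasGradientAt)
      have := HasGradientAt.add' hb hc
      rw [neg_one_smul] at this
      exact this
    have hmin : ∀ t : ℝ, 0 ≤ t → t ≤ 1 → φ z.1 ≤ φ (z.1 + t • (w.1 - z.1)) := by
      intro t ht0 ht1
      have hq' := simplex_seg hz1 hw1 ht0 ht1
      have hJ : ∀ x : Vec a₁, J1 ε₁ ν₁ D₁ R₁ (x, z.2.1, z.2.2.1, z.2.2.2) = φ x := by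
        intro x
        simp only [J1, hφ]
        rw [real_inner_comm]
        ring
      have h := hN1 _ hq'
      have hzJ : J1 ε₁ ν₁ D₁ R₁ z = φ z.1 := by
        simp only [J1, hφ]
        rw [real_inner_comm]
        ring
      rw [hzJ, hJ] at h
      exact h
    exact dir_nonneg hgrad w.1 hmin
  -- component 2
  have key2 : 0 ≤ (inner ℝ (-(mv R₂ z.2.2.2) + ε₂ • gradient ν₂ z.2.1) (w.2.1 - z.2.1) : ℝ) := by
    set φ : Vec a₂ → ℝ :=
      fun π => (-1 : ℝ) * (inner ℝ (mv R₂ z.2.2.2) π : ℝ) + -D₂ z.2.2.2 z.1 + ε₂ * ν₂ π with hφ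
    have hgrad : HasGradientAt φ (-(mv R₂ z.2.2.2) + ε₂ • gradient ν₂ z.2.1) z.2.1 := by
      have ha := HasGradientAt.constMul (-1 : ℝ) (hasGradientAt_inner_const (mv R₂ z.2.2.2) z.2.1)
      have hb := HasGradientAt.addConst (-D₂ z.2.2.2 z.1) ha
      have hc := HasGradientAt.constMul ε₂ ((hν₂ z.2.1).hasGradientAt)
      have := HasGradientAt.add' hb hc
      rw [neg_one_smul] at this
      exact this
    have hmin : ∀ t : ℝ, 0 ≤ t → t ≤ 1 → φ z.2.1 ≤ φ (z.2.1 + t • (w.2.1 - z.2.1)) := by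
      intro t ht0 ht1
      have hq' := simplex_seg hz2 hw2 ht0 ht1
      have hJ : ∀ x : Vec a₂, J2 ε₂ ν₂ D₂ R₂ (z.1, x, z.2.2.1, z.2.2.2) = φ x := by
        intro x
        simp only [J2, hφ]
        rw [real_inner_comm]
        ring
      have h := hN2 _ hq'
      have hzJ : J2 ε₂ ν₂ D₂ R₂ z = φ z.2.1 := by
        simp only [J2, hφ]
        rw [real_inner_comm]
        ring
      rw [hzJ, hJ] at h
      exact h
    exact dir_nonneg hgrad w.2.1 hmin
  -- component 3 (adversary 1)
  have key3 : 0 ≤ (inner ℝ (mv R₁.transpose z.1 + gradient (fun p => D₁ p z.2.1) z.2.2.1)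
      (w.2.2.1 - z.2.2.1) : ℝ) := by
    have hDdiff : DifferentiableAt ℝ (fun p : Vec a₂ => D₁ p z.2.1) z.2.2.1 := by
      exact (hD₁ (z.2.2.1, z.2.1)).comp z.2.2.1
        (DifferentiableAt.prodMk differentiableAt_id (differentiableAt_const z.2.1) :
          DifferentiableAt ℝ (fun p : Vec a₂ => (p, z.2.1)) z.2.2.1)
    set φ : Vec a₂ → ℝ :=
      fun p => (inner ℝ (mv R₁.transpose z.1) p : ℝ) + -(ε₁ * ν₁ z.1) + D₁ p z.2.1 with hφ
    have hgrad : HasGradientAt φ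
        (mv R₁.transpose z.1 + gradient (fun p => D₁ p z.2.1) z.2.2.1) z.2.2.1 := by
      have ha := HasGradientAt.addConst (-(ε₁ * ν₁ z.1))
        (hasGradientAt_inner_const (mv R₁.transpose z.1) z.2.2.1)
      exact HasGradientAt.add' ha hDdiff.hasGradientAt
    have hmin : ∀ t : ℝ, 0 ≤ t → t ≤ 1 → φ z.2.2.1 ≤ φ (z.2.2.1 + t • (w.2.2.1 - z.2.2.1)) := by
      intro t ht0 ht1
      have hq' := simplex_seg hz3 hw3 ht0 ht1
      have hJ : ∀ x : Vec a₂, -J1 ε₁ ν₁ D₁ R₁ (z.1, z.2.1, x, z.2.2.2) = φ x := by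
        intro x
        simp only [J1, hφ]
        rw [inner_mv_comm]
        ring
      have h := hN3 _ hq'
      have hzJ : -J1 ε₁ ν₁ D₁ R₁ z = φ z.2.2.1 := by
        simp only [J1, hφ]
        rw [inner_mv_comm]
        ring
      rw [hzJ, hJ] at h
      exact h
    exact dir_nonneg hgrad w.2.2.1 hmin
  -- component 4 (adversary 2)
  have key4 : 0 ≤ (inner ℝ (mv R₂.transpose z.2.1 + gradient (fun p => D₂ p z.1) z.2.2.2)
      (w.2.2.2 - z.2.2.2) : ℝ) := by
    have hDdiff : DifferentiableAt ℝ (fun p : Vec a₁ => D₂ p z.1) z.2.2.2 := by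
      exact (hD₂ (z.2.2.2, z.1)).comp z.2.2.2
        (DifferentiableAt.prodMk differentiableAt_id (differentiableAt_const z.1) :
          DifferentiableAt ℝ (fun p : Vec a₁ => (p, z.1)) z.2.2.2)
    set φ : Vec a₁ → ℝ :=
      fun p => (inner ℝ (mv R₂.transpose z.2.1) p : ℝ) + -(ε₂ * ν₂ z.2.1) + D₂ p z.1 with hφ
    have hgrad : HasGradientAt φ
        (mv R₂.transpose z.2.1 + gradient (fun p => D₂ p z.1) z.2.2.2) z.2.2.2 := by
      have ha := HasGradientAt.addConst (-(ε₂ * ν₂ z.2.1))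
        (hasGradientAt_inner_const (mv R₂.transpose z.2.1) z.2.2.2)
      exact HasGradientAt.add' ha hDdiff.hasGradientAt
    have hmin : ∀ t : ℝ, 0 ≤ t → t ≤ 1 → φ z.2.2.2 ≤ φ (z.2.2.2 + t • (w.2.2.2 - z.2.2.2)) := by
      intro t ht0 ht1
      have hq' := simplex_seg hz4 hw4 ht0 ht1
      have hJ : ∀ x : Vec a₁, -J2 ε₂ ν₂ D₂ R₂ (z.1, z.2.1, z.2.2.1, x) = φ x := by
        intro x
        simp only [J2, hφ]
        rw [inner_mv_comm]
        ring
      have h := hN4 _ hq'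
      have hzJ : -J2 ε₂ ν₂ D₂ R₂ z = φ z.2.2.2 := by
        simp only [J2, hφ]
        rw [inner_mv_comm]
        ring
      rw [hzJ, hJ] at h
      exact h
    exact dir_nonneg hgrad w.2.2.2 hmin
  have hexp : jip (w - z) (Fop ε₁ ε₂ ν₁ ν₂ D₁ D₂ R₁ R₂ z)
      = (inner ℝ (-(mv R₁ z.2.2.1) + ε₁ • gradient ν₁ z.1) (w.1 - z.1) : ℝ)
      + (inner ℝ (-(mv R₂ z.2.2.2) + ε₂ • gradient ν₂ z.2.1) (w.2.1 - z.2.1) : ℝ)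
      + (inner ℝ (mv R₁.transpose z.1 + gradient (fun p => D₁ p z.2.1) z.2.2.1)
          (w.2.2.1 - z.2.2.1) : ℝ)
      + (inner ℝ (mv R₂.transpose z.2.1 + gradient (fun p => D₂ p z.1) z.2.2.2)
          (w.2.2.2 - z.2.2.2) : ℝ) := by
    simp only [jip, Fop, Prod.fst_sub, Prod.snd_sub]
    rw [real_inner_comm (w.1 - z.1), real_inner_comm (w.2.1 - z.2.1),
      real_inner_comm (w.2.2.1 - z.2.2.1), real_inner_comm (w.2.2.2 - z.2.2.2)]
  rw [hexp]
  linarith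

lemma jip_sub_right {a₁ a₂ : ℕ} (u a b : Joint a₁ a₂) : jip u (a - b) = jip u a - jip u b := by
  simp only [jip, Prod.fst_sub, Prod.snd_sub, inner_sub_right]
  ring

lemma jip_neg_left {a₁ a₂ : ℕ} (u a : Joint a₁ a₂) : jip (-u) a = - jip u a := by
  simp only [jip, Prod.fst_neg, Prod.snd_neg, inner_neg_left]
  ring

set_option maxHeartbeats 1000000 in
lemma eq_components_close {a₁ a₂ : ℕ} {α ε₁ ε₂ : ℝ} {ν₁ : Vec a₁ → ℝ} {ν₂ : Vec a₂ → ℝ}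
    {D₁ : Vec a₂ → Vec a₂ → ℝ} {D₂ : Vec a₁ → Vec a₁ → ℝ} (hα : 0 < α)
    (hν₁ : Differentiable ℝ ν₁) (hν₂ : Differentiable ℝ ν₂)
    (hD₁ : Differentiable ℝ (fun x : Vec a₂ × Vec a₂ => D₁ x.1 x.2))
    (hD₂ : Differentiable ℝ (fun x : Vec a₁ × Vec a₁ => D₂ x.1 x.2))
    (hmono : ∀ (R₁ : Matrix (Fin a₁) (Fin a₂) ℝ) (R₂ : Matrix (Fin a₂) (Fin a₁) ℝ),
      StronglyMonotoneOnZ α ε₁ ε₂ ν₁ ν₂ D₁ D₂ R₁ R₂)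
    {R₁ R₁' : Matrix (Fin a₁) (Fin a₂) ℝ} {R₂ R₂' : Matrix (Fin a₂) (Fin a₁) ℝ}
    {z z' : Joint a₁ a₂}
    (hz : IsNash ε₁ ε₂ ν₁ ν₂ D₁ D₂ R₁ R₂ z) (hz' : IsNash ε₁ ε₂ ν₁ ν₂ D₁ D₂ R₁' R₂' z')
    {δ : ℝ} (hδ : 0 ≤ δ)
    (h1 : ∀ k j, |R₁ k j - R₁' k j| ≤ δ) (h2 : ∀ k j, |R₂ k j - R₂' k j| ≤ δ) :
    ‖z.1 - z'.1‖ ≤ 2 * (Real.sqrt a₁ + Real.sqrt a₂) * δ / α ∧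
      ‖z.2.1 - z'.2.1‖ ≤ 2 * (Real.sqrt a₁ + Real.sqrt a₂) * δ / α := by
  set u := z - z' with hu
  have hzZ : inZ z := hz.1
  have hz'Z : inZ z' := hz'.1
  have hVI1 := nash_vi hν₁ hν₂ hD₁ hD₂ R₁ R₂ hz z' hz'Z
  have hVI2 := nash_vi hν₁ hν₂ hD₁ hD₂ R₁' R₂' hz' z hzZ
  have hm := hmono R₁ R₂ z z' hzZ hz'Z
  have hneg : jip u (Fop ε₁ ε₂ ν₁ ν₂ D₁ D₂ R₁ R₂ z) ≤ 0 := by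
    have : z' - z = -u := by rw [hu]; abel
    rw [this, jip_neg_left] at hVI1
    linarith
  have hpos : 0 ≤ jip u (Fop ε₁ ε₂ ν₁ ν₂ D₁ D₂ R₁' R₂' z') := hVI2
  have hchain : α * jnormSq u
      ≤ jip u (Fop ε₁ ε₂ ν₁ ν₂ D₁ D₂ R₁' R₂' z' - Fop ε₁ ε₂ ν₁ ν₂ D₁ D₂ R₁ R₂ z') := by
    rw [jip_sub_right] at hm ⊢
    linarith
  have hdiff : Fop ε₁ ε₂ ν₁ ν₂ D₁ D₂ R₁' R₂' z' - Fop ε₁ ε₂ ν₁ ν₂ D₁ D₂ R₁ R₂ z'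
      = (mv (R₁ - R₁') z'.2.2.1, mv (R₂ - R₂') z'.2.2.2,
         mv (R₁' - R₁).transpose z'.1, mv (R₂' - R₂).transpose z'.2.1) := by
    simp only [Fop, Prod.mk_sub_mk]
    refine Prod.ext ?_ (Prod.ext ?_ (Prod.ext ?_ ?_)) <;> simp only [Matrix.transpose_sub, mv_sub] <;> abel
  rw [hdiff] at hchain
  -- bound the rhs
  set c : ℝ := 2 * (Real.sqrt a₁ + Real.sqrt a₂) * δ with hc
  have hca : 0 ≤ c := by
    have := Real.sqrt_nonneg (a₁ : ℝ); have := Real.sqrt_nonneg (a₂ : ℝ)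
    positivity
  set s : ℝ := jnormSq u with hs
  have hs0 : 0 ≤ s := by
    rw [hs, jnormSq]; positivity
  have hb1 : ‖mv (R₁ - R₁') z'.2.2.1‖ ≤ Real.sqrt a₁ * δ := by
    apply norm_le_sqrt_card hδ
    intro k
    apply mv_entry_abs_le _ hz'Z.2.2.1
    intro k j
    simpa [Matrix.sub_apply] using h1 k j
  have hb2 : ‖mv (R₂ - R₂') z'.2.2.2‖ ≤ Real.sqrt a₂ * δ := by
    apply norm_le_sqrt_card hδ
    intro k
    apply mv_entry_abs_le _ hz'Z.2.2.2
    intro k j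
    simpa [Matrix.sub_apply] using h2 k j
  have hb3 : ‖mv (R₁' - R₁).transpose z'.1‖ ≤ Real.sqrt a₂ * δ := by
    apply norm_le_sqrt_card hδ
    intro k
    apply mv_entry_abs_le _ hz'Z.1
    intro k j
    rw [Matrix.transpose_apply, Matrix.sub_apply, abs_sub_comm]
    exact h1 j k
  have hb4 : ‖mv (R₂' - R₂).transpose z'.2.1‖ ≤ Real.sqrt a₁ * δ := by
    apply norm_le_sqrt_card hδ
    intro k
    apply mv_entry_abs_le _ hz'Z.2.1
    intro k j
    rw [Matrix.transpose_apply, Matrix.sub_apply, abs_sub_comm]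
    exact h2 j k
  have hsq : ∀ v : ℝ, v ^ 2 ≤ s → 0 ≤ v → v ≤ Real.sqrt s := by
    intro v hv hv0
    calc v = Real.sqrt (v ^ 2) := by rw [Real.sqrt_sq hv0]
      _ ≤ Real.sqrt s := Real.sqrt_le_sqrt hv
  have hsexp : s = ‖u.1‖ ^ 2 + ‖u.2.1‖ ^ 2 + ‖u.2.2.1‖ ^ 2 + ‖u.2.2.2‖ ^ 2 := by
    rw [hs, jnormSq]
  have hnu1 : ‖u.1‖ ≤ Real.sqrt s := by
    apply hsq _ _ (norm_nonneg _)
    rw [hsexp]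
    linarith [sq_nonneg ‖u.2.1‖, sq_nonneg ‖u.2.2.1‖, sq_nonneg ‖u.2.2.2‖]
  have hnu2 : ‖u.2.1‖ ≤ Real.sqrt s := by
    apply hsq _ _ (norm_nonneg _)
    rw [hsexp]
    linarith [sq_nonneg ‖u.1‖, sq_nonneg ‖u.2.2.1‖, sq_nonneg ‖u.2.2.2‖]
  have hnu3 : ‖u.2.2.1‖ ≤ Real.sqrt s := by
    apply hsq _ _ (norm_nonneg _)
    rw [hsexp]
    linarith [sq_nonneg ‖u.1‖, sq_nonneg ‖u.2.1‖, sq_nonneg ‖u.2.2.2‖]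
  have hnu4 : ‖u.2.2.2‖ ≤ Real.sqrt s := by
    apply hsq _ _ (norm_nonneg _)
    rw [hsexp]
    linarith [sq_nonneg ‖u.1‖, sq_nonneg ‖u.2.1‖, sq_nonneg ‖u.2.2.1‖]
  have hsqrt0 : 0 ≤ Real.sqrt s := Real.sqrt_nonneg s
  have hrhs : jip u (mv (R₁ - R₁') z'.2.2.1, mv (R₂ - R₂') z'.2.2.2,
      mv (R₁' - R₁).transpose z'.1, mv (R₂' - R₂).transpose z'.2.1) ≤ Real.sqrt s * c := by
    have t1 : (inner ℝ u.1 (mv (R₁ - R₁') z'.2.2.1) : ℝ) ≤ Real.sqrt s * (Real.sqrt a₁ * δ) :=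
      le_trans (real_inner_le_norm _ _) (mul_le_mul hnu1 hb1 (norm_nonneg _) hsqrt0)
    have t2 : (inner ℝ u.2.1 (mv (R₂ - R₂') z'.2.2.2) : ℝ) ≤ Real.sqrt s * (Real.sqrt a₂ * δ) :=
      le_trans (real_inner_le_norm _ _) (mul_le_mul hnu2 hb2 (norm_nonneg _) hsqrt0)
    have t3 : (inner ℝ u.2.2.1 (mv (R₁' - R₁).transpose z'.1) : ℝ)
        ≤ Real.sqrt s * (Real.sqrt a₂ * δ) :=
      le_trans (real_inner_le_norm _ _) (mul_le_mul hnu3 hb3 (norm_nonneg _) hsqrt0)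
    have t4 : (inner ℝ u.2.2.2 (mv (R₂' - R₂).transpose z'.2.1) : ℝ)
        ≤ Real.sqrt s * (Real.sqrt a₁ * δ) :=
      le_trans (real_inner_le_norm _ _) (mul_le_mul hnu4 hb4 (norm_nonneg _) hsqrt0)
    have : jip u (mv (R₁ - R₁') z'.2.2.1, mv (R₂ - R₂') z'.2.2.2,
        mv (R₁' - R₁).transpose z'.1, mv (R₂' - R₂).transpose z'.2.1)
        = (inner ℝ u.1 (mv (R₁ - R₁') z'.2.2.1) : ℝ)
        + (inner ℝ u.2.1 (mv (R₂ - R₂') z'.2.2.2) : ℝ)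
        + (inner ℝ u.2.2.1 (mv (R₁' - R₁).transpose z'.1) : ℝ)
        + (inner ℝ u.2.2.2 (mv (R₂' - R₂).transpose z'.2.1) : ℝ) := rfl
    rw [this, hc]
    linarith
  have hαs : α * s ≤ Real.sqrt s * c := le_trans hchain hrhs
  have hss : Real.sqrt s * Real.sqrt s = s := Real.mul_self_sqrt hs0
  have hfin : Real.sqrt s ≤ c / α := by
    rcases eq_or_lt_of_le hsqrt0 with h0 | h0
    · rw [← h0]; positivity
    · rw [le_div_iff₀ hα]
      nlinarith
  have hu1 : u.1 = z.1 - z'.1 := Prod.fst_sub z z'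
  have hu2 : u.2.1 = z.2.1 - z'.2.1 := by rw [hu]; rfl
  constructor
  · rw [← hu1]
    calc ‖u.1‖ ≤ Real.sqrt s := hnu1
      _ ≤ c / α := hfin
      _ = 2 * (Real.sqrt a₁ + Real.sqrt a₂) * δ / α := by rw [hc]
  · rw [← hu2]
    calc ‖u.2.1‖ ≤ Real.sqrt s := hnu2
      _ ≤ c / α := hfin
      _ = 2 * (Real.sqrt a₁ + Real.sqrt a₂) * δ / α := by rw [hc]

lemma val_step {n m : ℕ} {A A' : Matrix (Fin n) (Fin m) ℝ} {x : Vec n} {y c c' : Vec m}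
    {D : Vec m → Vec m → ℝ} {L δ : ℝ}
    (hx : x ∈ Δ n) (hy : y ∈ Δ m) (hc : c ∈ Δ m) (hc' : c' ∈ Δ m)
    (hδ : ∀ k j, |A k j - A' k j| ≤ δ)
    (htri : ∀ u ∈ Δ m, ∀ v ∈ Δ m, ∀ w ∈ Δ m, D u w ≤ D u v + D v w)
    (hlip : ∀ u ∈ Δ m, ∀ v ∈ Δ m, D u v ≤ L * ‖u - v‖) :
    -(inner ℝ x (mv A y) : ℝ) - D y c
      ≤ -(inner ℝ x (mv A' y) : ℝ) - D y c' + δ + L * ‖c - c'‖ := by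
  have hAdiff : (inner ℝ x (mv A y) : ℝ) - (inner ℝ x (mv A' y) : ℝ)
      = (inner ℝ x (mv (A - A') y) : ℝ) := by
    rw [mv_sub, inner_sub_right]
  have h1 : |(inner ℝ x (mv (A - A') y) : ℝ)| ≤ δ := by
    apply quad_abs_le _ hx hy
    intro k j
    simpa [Matrix.sub_apply] using hδ k j
  have h2 : D y c' ≤ D y c + D c c' := htri y hy c hc c' hc'
  have h3 : D c c' ≤ L * ‖c - c'‖ := hlip c hc c' hc'
  have := abs_le.1 h1
  rw [← hAdiff] at this
  linarith [this.1, this.2]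

lemma J1_le {a₁ a₂ : ℕ} {ε₁ ε₂ : ℝ} {ν₁ : Vec a₁ → ℝ} {ν₂ : Vec a₂ → ℝ}
    {D₁ : Vec a₂ → Vec a₂ → ℝ} {D₂ : Vec a₁ → Vec a₁ → ℝ} {L : ℝ}
    (htri : ∀ u ∈ Δ a₂, ∀ v ∈ Δ a₂, ∀ w ∈ Δ a₂, D₁ u w ≤ D₁ u v + D₁ v w)
    (hlip : ∀ u ∈ Δ a₂, ∀ v ∈ Δ a₂, D₁ u v ≤ L * ‖u - v‖)
    {R₁ R₁' : Matrix (Fin a₁) (Fin a₂) ℝ} {R₂ R₂' : Matrix (Fin a₂) (Fin a₁) ℝ}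
    {z z' : Joint a₁ a₂}
    (hz : IsNash ε₁ ε₂ ν₁ ν₂ D₁ D₂ R₁ R₂ z) (hz' : IsNash ε₁ ε₂ ν₁ ν₂ D₁ D₂ R₁' R₂' z')
    {δ : ℝ} (hδe : ∀ k j, |R₁ k j - R₁' k j| ≤ δ) :
    J1 ε₁ ν₁ D₁ R₁ z ≤ J1 ε₁ ν₁ D₁ R₁' z' + δ + L * ‖z.2.1 - z'.2.1‖ := by
  have step1 := hz.2.1 z'.1 hz'.1.1
  have step3 := hz'.2.2.2.1 z.2.2.1 hz.1.2.2.1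
  have hstep := val_step (L := L) hz'.1.1 hz.1.2.2.1 hz.1.2.1 hz'.1.2.1 hδe htri hlip
  simp only [J1] at step1 step3 ⊢
  linarith

lemma J2_le {a₁ a₂ : ℕ} {ε₁ ε₂ : ℝ} {ν₁ : Vec a₁ → ℝ} {ν₂ : Vec a₂ → ℝ}
    {D₁ : Vec a₂ → Vec a₂ → ℝ} {D₂ : Vec a₁ → Vec a₁ → ℝ} {L : ℝ}
    (htri : ∀ u ∈ Δ a₁, ∀ v ∈ Δ a₁, ∀ w ∈ Δ a₁, D₂ u w ≤ D₂ u v + D₂ v w)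
    (hlip : ∀ u ∈ Δ a₁, ∀ v ∈ Δ a₁, D₂ u v ≤ L * ‖u - v‖)
    {R₁ R₁' : Matrix (Fin a₁) (Fin a₂) ℝ} {R₂ R₂' : Matrix (Fin a₂) (Fin a₁) ℝ}
    {z z' : Joint a₁ a₂}
    (hz : IsNash ε₁ ε₂ ν₁ ν₂ D₁ D₂ R₁ R₂ z) (hz' : IsNash ε₁ ε₂ ν₁ ν₂ D₁ D₂ R₁' R₂' z')
    {δ : ℝ} (hδe : ∀ k j, |R₂ k j - R₂' k j| ≤ δ) :
    J2 ε₂ ν₂ D₂ R₂ z ≤ J2 ε₂ ν₂ D₂ R₂' z' + δ + L * ‖z.1 - z'.1‖ := by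
  have step1 := hz.2.2.1 z'.2.1 hz'.1.2.1
  have step3 := hz'.2.2.2.2 z.2.2.2 hz.1.2.2.2
  have hstep := val_step (L := L) hz'.1.2.1 hz.1.2.2.2 hz.1.1 hz'.1.1 hδe htri hlip
  simp only [J2] at step1 step3 ⊢
  linarith

lemma RQE_close {a₁ a₂ : ℕ} {α ε₁ ε₂ L : ℝ} {ν₁ : Vec a₁ → ℝ} {ν₂ : Vec a₂ → ℝ}
    {D₁ : Vec a₂ → Vec a₂ → ℝ} {D₂ : Vec a₁ → Vec a₁ → ℝ} (hα : 0 < α) (hL : 0 ≤ L)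
    (hν₁ : Differentiable ℝ ν₁) (hν₂ : Differentiable ℝ ν₂)
    (hD₁ : Differentiable ℝ (fun x : Vec a₂ × Vec a₂ => D₁ x.1 x.2))
    (hD₂ : Differentiable ℝ (fun x : Vec a₁ × Vec a₁ => D₂ x.1 x.2))
    (hmono : ∀ (R₁ : Matrix (Fin a₁) (Fin a₂) ℝ) (R₂ : Matrix (Fin a₂) (Fin a₁) ℝ),
      StronglyMonotoneOnZ α ε₁ ε₂ ν₁ ν₂ D₁ D₂ R₁ R₂)
    (htri₁ : ∀ u ∈ Δ a₂, ∀ v ∈ Δ a₂, ∀ w ∈ Δ a₂, D₁ u w ≤ D₁ u v + D₁ v w)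
    (hlip₁ : ∀ u ∈ Δ a₂, ∀ v ∈ Δ a₂, D₁ u v ≤ L * ‖u - v‖)
    (htri₂ : ∀ u ∈ Δ a₁, ∀ v ∈ Δ a₁, ∀ w ∈ Δ a₁, D₂ u w ≤ D₂ u v + D₂ v w)
    (hlip₂ : ∀ u ∈ Δ a₁, ∀ v ∈ Δ a₁, D₂ u v ≤ L * ‖u - v‖)
    {R₁ R₁' : Matrix (Fin a₁) (Fin a₂) ℝ} {R₂ R₂' : Matrix (Fin a₂) (Fin a₁) ℝ}
    {z z' : Joint a₁ a₂}
    (hz : IsNash ε₁ ε₂ ν₁ ν₂ D₁ D₂ R₁ R₂ z) (hz' : IsNash ε₁ ε₂ ν₁ ν₂ D₁ D₂ R₁' R₂' z')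
    {δ : ℝ} (hδ : 0 ≤ δ)
    (h1 : ∀ k j, |R₁ k j - R₁' k j| ≤ δ) (h2 : ∀ k j, |R₂ k j - R₂' k j| ≤ δ) :
    |J1 ε₁ ν₁ D₁ R₁ z - J1 ε₁ ν₁ D₁ R₁' z'|
        ≤ δ * (1 + 2 * L * (Real.sqrt a₁ + Real.sqrt a₂) / α) ∧
      |J2 ε₂ ν₂ D₂ R₂ z - J2 ε₂ ν₂ D₂ R₂' z'|
        ≤ δ * (1 + 2 * L * (Real.sqrt a₁ + Real.sqrt a₂) / α) := by
  obtain ⟨hn1, hn2⟩ := eq_components_close hα hν₁ hν₂ hD₁ hD₂ hmono hz hz' hδ h1 h2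
  have h1' : ∀ k j, |R₁' k j - R₁ k j| ≤ δ := fun k j => by rw [abs_sub_comm]; exact h1 k j
  have h2' : ∀ k j, |R₂' k j - R₂ k j| ≤ δ := fun k j => by rw [abs_sub_comm]; exact h2 k j
  have hLK : L * (2 * (Real.sqrt a₁ + Real.sqrt a₂) * δ / α)
      = δ * (2 * L * (Real.sqrt a₁ + Real.sqrt a₂) / α) := by ring
  have ha := J1_le htri₁ hlip₁ hz hz' h1
  have hb := J1_le htri₁ hlip₁ hz' hz h1'
  have hc := J2_le htri₂ hlip₂ hz hz' h2
  have hd := J2_le htri₂ hlip₂ hz' hz h2'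
  rw [norm_sub_rev] at hb hd
  have hm1 : L * ‖z.2.1 - z'.2.1‖ ≤ δ * (2 * L * (Real.sqrt a₁ + Real.sqrt a₂) / α) := by
    rw [← hLK]; exact mul_le_mul_of_nonneg_left hn2 hL
  have hm2 : L * ‖z.1 - z'.1‖ ≤ δ * (2 * L * (Real.sqrt a₁ + Real.sqrt a₂) / α) := by
    rw [← hLK]; exact mul_le_mul_of_nonneg_left hn1 hL
  constructor
  · rw [abs_le]
    constructor <;> nlinarith
  · rw [abs_le]
    constructor <;> nlinarith

lemma inf_close {S : Type*} [Fintype S] [Nonempty S] (V V' : S → ℝ)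
    (Denv : (S → ℝ) → (S → ℝ) → ℝ) (y : S → ℝ)
    (hbdd : BddBelow ((fun Pt => Denv Pt y) '' stdSimplex ℝ S))
    {c : ℝ} (hc : 0 ≤ c) (hV : ∀ s, |V s - V' s| ≤ c) :
    |(⨅ Pt : stdSimplex ℝ S, (-(∑ s', (Pt : S → ℝ) s' * V s') + Denv Pt y))
      - (⨅ Pt : stdSimplex ℝ S, (-(∑ s', (Pt : S → ℝ) s' * V' s') + Denv Pt y))| ≤ c := by
  classical
  haveI : Nonempty (stdSimplex ℝ S) :=
    ⟨⟨Pi.single (Classical.arbitrary S) 1, single_mem_stdSimplex ℝ _⟩⟩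
  obtain ⟨b, hb⟩ := hbdd
  set f : stdSimplex ℝ S → ℝ := fun Pt => -(∑ s', (Pt : S → ℝ) s' * V s') + Denv Pt y with hf
  set g : stdSimplex ℝ S → ℝ := fun Pt => -(∑ s', (Pt : S → ℝ) s' * V' s') + Denv Pt y with hg
  have hPt01 : ∀ Pt : stdSimplex ℝ S, ∀ s, 0 ≤ (Pt : S → ℝ) s ∧ (Pt : S → ℝ) s ≤ 1 := by
    intro Pt s
    refine ⟨Pt.2.1 s, ?_⟩
    have := Finset.single_le_sum (f := fun s => (Pt : S → ℝ) s)
      (fun i _ => Pt.2.1 i) (Finset.mem_univ s)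
    rw [show ∑ i, (Pt : S → ℝ) i = 1 from Pt.2.2] at this
    exact this
  have hsum_le : ∀ (W : S → ℝ) (Pt : stdSimplex ℝ S),
      |∑ s', (Pt : S → ℝ) s' * W s'| ≤ ∑ s', |W s'| := by
    intro W Pt
    calc |∑ s', (Pt : S → ℝ) s' * W s'| ≤ ∑ s', |(Pt : S → ℝ) s' * W s'| :=
          Finset.abs_sum_le_sum_abs _ _
      _ ≤ ∑ s', |W s'| := by
          apply Finset.sum_le_sum
          intro s _
          rw [abs_mul, abs_of_nonneg (hPt01 Pt s).1]
          calc (Pt : S → ℝ) s * |W s| ≤ 1 * |W s| :=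
                mul_le_mul_of_nonneg_right (hPt01 Pt s).2 (abs_nonneg _)
            _ = |W s| := one_mul _
  have hDb : ∀ Pt : stdSimplex ℝ S, b ≤ Denv Pt y := by
    intro Pt
    exact hb ⟨Pt, Pt.2, rfl⟩
  have hbf : BddBelow (Set.range f) := by
    refine ⟨-(∑ s', |V s'|) + b, ?_⟩
    rintro r ⟨Pt, rfl⟩
    have := hsum_le V Pt
    have := hDb Pt
    rw [hf]
    simp only
    have h1 := (abs_le.1 (hsum_le V Pt)).2
    linarith
  have hbg : BddBelow (Set.range g) := by
    refine ⟨-(∑ s', |V' s'|) + b, ?_⟩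
    rintro r ⟨Pt, rfl⟩
    have := hDb Pt
    rw [hg]
    simp only
    have h1 := (abs_le.1 (hsum_le V' Pt)).2
    linarith
  have hpt : ∀ Pt : stdSimplex ℝ S, |f Pt - g Pt| ≤ c := by
    intro Pt
    have hfg : f Pt - g Pt = ∑ s', (Pt : S → ℝ) s' * (V' s' - V s') := by
      rw [hf, hg]
      simp only [mul_sub]
      rw [Finset.sum_sub_distrib]
      ring
    rw [hfg]
    calc |∑ s', (Pt : S → ℝ) s' * (V' s' - V s')| ≤ ∑ s', |(Pt : S → ℝ) s' * (V' s' - V s')| :=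
          Finset.abs_sum_le_sum_abs _ _
      _ ≤ ∑ s', (Pt : S → ℝ) s' * c := by
          apply Finset.sum_le_sum
          intro s _
          rw [abs_mul, abs_of_nonneg (hPt01 Pt s).1]
          apply mul_le_mul_of_nonneg_left _ (hPt01 Pt s).1
          rw [abs_sub_comm]
          exact hV s
      _ = c := by rw [← Finset.sum_mul, show ∑ i, (Pt : S → ℝ) i = 1 from Pt.2.2, one_mul]
  have h1 : iInf f ≤ iInf g + c := by
    rw [← sub_le_iff_le_add]
    apply le_ciInf
    intro Pt
    have ha := ciInf_le hbf Pt
    have hb2 := (abs_le.1 (hpt Pt)).2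
    linarith
  have h2 : iInf g ≤ iInf f + c := by
    rw [← sub_le_iff_le_add]
    apply le_ciInf
    intro Pt
    have ha := ciInf_le hbg Pt
    have hb2 := (abs_le.1 (hpt Pt)).1
    linarith
  rw [abs_le]
  constructor <;> [linarith; linarith]

/-- Under `α`-strong monotonicity of the gradient operator for every
payoff pair and the symmetry/triangle/`L`-Lipschitz assumptions on `D₁, D₂`, the risk-averse
quantal-response Bellman operator satisfies
`‖T Q − T Q'‖_∞ ≤ γ (1 + 2L(√a₁ + √a₂)/α) ‖Q − Q'‖_∞`; in particular it is nonexpansive when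
`γ ≤ α/(α + 2L(√a₁ + √a₂))` and a contraction when this inequality is strict. -/
theorem rqBellman_contraction
    {a₁ a₂ : ℕ} (ha₁ : 1 ≤ a₁) (ha₂ : 1 ≤ a₂)
    {S : Type*} [Fintype S] [Nonempty S]
    (ε₁ ε₂ : ℝ) (hε₁ : 0 < ε₁) (hε₂ : 0 < ε₂) (α L : ℝ) (hα : 0 < α) (hL : 0 ≤ L)
    (ν₁ : Vec a₁ → ℝ) (ν₂ : Vec a₂ → ℝ)
    (D₁ : Vec a₂ → Vec a₂ → ℝ) (D₂ : Vec a₁ → Vec a₁ → ℝ)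
    (hν₁ : Differentiable ℝ ν₁) (hν₂ : Differentiable ℝ ν₂)
    (hD₁ : Differentiable ℝ (fun x : Vec a₂ × Vec a₂ => D₁ x.1 x.2))
    (hD₂ : Differentiable ℝ (fun x : Vec a₁ × Vec a₁ => D₂ x.1 x.2))
    -- (i) strong monotonicity for every payoff pair:
    (hmono : ∀ (R₁ : Matrix (Fin a₁) (Fin a₂) ℝ) (R₂ : Matrix (Fin a₂) (Fin a₁) ℝ),
      StronglyMonotoneOnZ α ε₁ ε₂ ν₁ ν₂ D₁ D₂ R₁ R₂)
    -- (ii) each `Dᵢ` is a symmetric, triangle-inequality, `L`-Lipschitz penalty: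
    (hD₁symm : ∀ x ∈ Δ a₂, ∀ y ∈ Δ a₂, D₁ x y = D₁ y x)
    (hD₂symm : ∀ x ∈ Δ a₁, ∀ y ∈ Δ a₁, D₂ x y = D₂ y x)
    (hD₁tri : ∀ x ∈ Δ a₂, ∀ y ∈ Δ a₂, ∀ w ∈ Δ a₂, D₁ x w ≤ D₁ x y + D₁ y w)
    (hD₂tri : ∀ x ∈ Δ a₁, ∀ y ∈ Δ a₁, ∀ w ∈ Δ a₁, D₂ x w ≤ D₂ x y + D₂ y w)
    (hD₁lip : ∀ x ∈ Δ a₂, ∀ y ∈ Δ a₂, D₁ x y ≤ L * ‖x - y‖)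
    (hD₂lip : ∀ x ∈ Δ a₁, ∀ y ∈ Δ a₁, D₂ x y ≤ L * ‖x - y‖)
    -- (iii) `ρ` selects a Nash equilibrium for every payoff pair:
    (ρ : Matrix (Fin a₁) (Fin a₂) ℝ → Matrix (Fin a₂) (Fin a₁) ℝ → Joint a₁ a₂)
    (hρ : ∀ R₁ R₂, IsNash ε₁ ε₂ ν₁ ν₂ D₁ D₂ R₁ R₂ (ρ R₁ R₂))
    -- the Markov game data:
    (γ : ℝ) (hγ0 : 0 ≤ γ) (hγ1 : γ < 1)
    (r₁ r₂ : S × (Fin a₁ × Fin a₂) → ℝ)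
    (P : S × (Fin a₁ × Fin a₂) → S → ℝ) (hP : ∀ sa, P sa ∈ stdSimplex ℝ S)
    (D₁env D₂env : (S → ℝ) → (S → ℝ) → ℝ)
    (hD₁env : ∀ y : S → ℝ, BddBelow ((fun Pt => D₁env Pt y) '' stdSimplex ℝ S))
    (hD₂env : ∀ y : S → ℝ, BddBelow ((fun Pt => D₂env Pt y) '' stdSimplex ℝ S)) :
    (∀ Q Q' : (S × (Fin a₁ × Fin a₂) → ℝ) × (S × (Fin a₁ × Fin a₂) → ℝ),
        ‖rqBellman ε₁ ε₂ ν₁ ν₂ D₁ D₂ ρ γ r₁ r₂ P D₁env D₂env Q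
            - rqBellman ε₁ ε₂ ν₁ ν₂ D₁ D₂ ρ γ r₁ r₂ P D₁env D₂env Q'‖
          ≤ γ * (1 + 2 * L * (Real.sqrt a₁ + Real.sqrt a₂) / α) * ‖Q - Q'‖)
    ∧ (γ ≤ α / (α + 2 * L * (Real.sqrt a₁ + Real.sqrt a₂)) →
        ∀ Q Q' : (S × (Fin a₁ × Fin a₂) → ℝ) × (S × (Fin a₁ × Fin a₂) → ℝ),
          ‖rqBellman ε₁ ε₂ ν₁ ν₂ D₁ D₂ ρ γ r₁ r₂ P D₁env D₂env Q
              - rqBellman ε₁ ε₂ ν₁ ν₂ D₁ D₂ ρ γ r₁ r₂ P D₁env D₂env Q'‖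
            ≤ ‖Q - Q'‖)
    ∧ (γ < α / (α + 2 * L * (Real.sqrt a₁ + Real.sqrt a₂)) →
        ∃ c : ℝ, 0 ≤ c ∧ c < 1 ∧
          ∀ Q Q' : (S × (Fin a₁ × Fin a₂) → ℝ) × (S × (Fin a₁ × Fin a₂) → ℝ),
            ‖rqBellman ε₁ ε₂ ν₁ ν₂ D₁ D₂ ρ γ r₁ r₂ P D₁env D₂env Q
                - rqBellman ε₁ ε₂ ν₁ ν₂ D₁ D₂ ρ γ r₁ r₂ P D₁env D₂env Q'‖
              ≤ c * ‖Q - Q'‖) := by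
  classical
  have hs1 : (0:ℝ) ≤ Real.sqrt a₁ + Real.sqrt a₂ := by positivity
  have hβ0 : (0:ℝ) ≤ 2 * L * (Real.sqrt a₁ + Real.sqrt a₂) := by
    apply mul_nonneg _ hs1
    linarith
  have hc₀1 : (1:ℝ) ≤ 1 + 2 * L * (Real.sqrt a₁ + Real.sqrt a₂) / α := by
    have : 0 ≤ 2 * L * (Real.sqrt a₁ + Real.sqrt a₂) / α := div_nonneg hβ0 hα.le
    linarith
  have hc₀0 : (0:ℝ) ≤ 1 + 2 * L * (Real.sqrt a₁ + Real.sqrt a₂) / α := by linarith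
  have hmain : ∀ Q Q' : (S × (Fin a₁ × Fin a₂) → ℝ) × (S × (Fin a₁ × Fin a₂) → ℝ),
      ‖rqBellman ε₁ ε₂ ν₁ ν₂ D₁ D₂ ρ γ r₁ r₂ P D₁env D₂env Q
          - rqBellman ε₁ ε₂ ν₁ ν₂ D₁ D₂ ρ γ r₁ r₂ P D₁env D₂env Q'‖
        ≤ γ * (1 + 2 * L * (Real.sqrt a₁ + Real.sqrt a₂) / α) * ‖Q - Q'‖ := by
    intro Q Q'
    set d : ℝ := ‖Q - Q'‖ with hd
    have hd0 : 0 ≤ d := norm_nonneg _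
    have hQ1 : ∀ sa, |Q.1 sa - Q'.1 sa| ≤ d := by
      intro sa
      have he : (Q - Q').1 sa = Q.1 sa - Q'.1 sa := by rw [Prod.fst_sub]; rfl
      calc |Q.1 sa - Q'.1 sa| = ‖(Q - Q').1 sa‖ := by rw [he, Real.norm_eq_abs]
        _ ≤ ‖(Q - Q').1‖ := norm_le_pi_norm _ sa
        _ ≤ d := norm_fst_le _
    have hQ2 : ∀ sa, |Q.2 sa - Q'.2 sa| ≤ d := by
      intro sa
      have he : (Q - Q').2 sa = Q.2 sa - Q'.2 sa := by rw [Prod.snd_sub]; rfl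
      calc |Q.2 sa - Q'.2 sa| = ‖(Q - Q').2 sa‖ := by rw [he, Real.norm_eq_abs]
        _ ≤ ‖(Q - Q').2‖ := norm_le_pi_norm _ sa
        _ ≤ d := norm_snd_le _
    have hRQE : ∀ s' : S,
        |J1 ε₁ ν₁ D₁ (QtoR1 Q s') (ρ (QtoR1 Q s') (QtoR2 Q s'))
            - J1 ε₁ ν₁ D₁ (QtoR1 Q' s') (ρ (QtoR1 Q' s') (QtoR2 Q' s'))|
          ≤ d * (1 + 2 * L * (Real.sqrt a₁ + Real.sqrt a₂) / α) ∧
        |J2 ε₂ ν₂ D₂ (QtoR2 Q s') (ρ (QtoR1 Q s') (QtoR2 Q s'))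
            - J2 ε₂ ν₂ D₂ (QtoR2 Q' s') (ρ (QtoR1 Q' s') (QtoR2 Q' s'))|
          ≤ d * (1 + 2 * L * (Real.sqrt a₁ + Real.sqrt a₂) / α) := by
      intro s'
      apply RQE_close hα hL hν₁ hν₂ hD₁ hD₂ hmono hD₁tri hD₁lip hD₂tri hD₂lip
        (hρ _ _) (hρ _ _) hd0
      · intro k j
        simpa [QtoR1] using hQ1 (s', (k, j))
      · intro k j
        simpa [QtoR2] using hQ2 (s', (j, k))
    set c : ℝ := d * (1 + 2 * L * (Real.sqrt a₁ + Real.sqrt a₂) / α) with hcdef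
    have hc0 : 0 ≤ c := mul_nonneg hd0 hc₀0
    have hI1 : ∀ sa, |(⨅ Pt : stdSimplex ℝ S,
          (-(∑ s', (Pt : S → ℝ) s' *
              J1 ε₁ ν₁ D₁ (QtoR1 Q s') (ρ (QtoR1 Q s') (QtoR2 Q s'))) + D₁env Pt (P sa)))
        - (⨅ Pt : stdSimplex ℝ S,
          (-(∑ s', (Pt : S → ℝ) s' *
              J1 ε₁ ν₁ D₁ (QtoR1 Q' s') (ρ (QtoR1 Q' s') (QtoR2 Q' s'))) + D₁env Pt (P sa)))| ≤ c := by
      intro sa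
      exact inf_close (fun s' => J1 ε₁ ν₁ D₁ (QtoR1 Q s') (ρ (QtoR1 Q s') (QtoR2 Q s')))
        (fun s' => J1 ε₁ ν₁ D₁ (QtoR1 Q' s') (ρ (QtoR1 Q' s') (QtoR2 Q' s')))
        D₁env (P sa) (hD₁env (P sa)) hc0 (fun s' => (hRQE s').1)
    have hI2 : ∀ sa, |(⨅ Pt : stdSimplex ℝ S,
          (-(∑ s', (Pt : S → ℝ) s' *
              J2 ε₂ ν₂ D₂ (QtoR2 Q s') (ρ (QtoR1 Q s') (QtoR2 Q s'))) + D₂env Pt (P sa)))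
        - (⨅ Pt : stdSimplex ℝ S,
          (-(∑ s', (Pt : S → ℝ) s' *
              J2 ε₂ ν₂ D₂ (QtoR2 Q' s') (ρ (QtoR1 Q' s') (QtoR2 Q' s'))) + D₂env Pt (P sa)))| ≤ c := by
      intro sa
      exact inf_close (fun s' => J2 ε₂ ν₂ D₂ (QtoR2 Q s') (ρ (QtoR1 Q s') (QtoR2 Q s')))
        (fun s' => J2 ε₂ ν₂ D₂ (QtoR2 Q' s') (ρ (QtoR1 Q' s') (QtoR2 Q' s')))
        D₂env (P sa) (hD₂env (P sa)) hc0 (fun s' => (hRQE s').2)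
    rw [Prod.norm_def]
    have hγc : 0 ≤ γ * (1 + 2 * L * (Real.sqrt a₁ + Real.sqrt a₂) / α) * d :=
      mul_nonneg (mul_nonneg hγ0 hc₀0) hd0
    apply max_le
    · rw [pi_norm_le_iff_of_nonneg hγc]
      intro sa
      have he : (rqBellman ε₁ ε₂ ν₁ ν₂ D₁ D₂ ρ γ r₁ r₂ P D₁env D₂env Q
          - rqBellman ε₁ ε₂ ν₁ ν₂ D₁ D₂ ρ γ r₁ r₂ P D₁env D₂env Q').1 sa
          = γ * ((⨅ Pt : stdSimplex ℝ S,
          (-(∑ s', (Pt : S → ℝ) s' *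
              J1 ε₁ ν₁ D₁ (QtoR1 Q s') (ρ (QtoR1 Q s') (QtoR2 Q s'))) + D₁env Pt (P sa)))
        - (⨅ Pt : stdSimplex ℝ S,
          (-(∑ s', (Pt : S → ℝ) s' *
              J1 ε₁ ν₁ D₁ (QtoR1 Q' s') (ρ (QtoR1 Q' s') (QtoR2 Q' s'))) + D₁env Pt (P sa)))) := by
        rw [Prod.fst_sub]
        show (rqBellman ε₁ ε₂ ν₁ ν₂ D₁ D₂ ρ γ r₁ r₂ P D₁env D₂env Q).1 sa
          - (rqBellman ε₁ ε₂ ν₁ ν₂ D₁ D₂ ρ γ r₁ r₂ P D₁env D₂env Q').1 sa = _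
        simp only [rqBellman]
        ring
      rw [Real.norm_eq_abs, he, abs_mul, abs_of_nonneg hγ0]
      calc γ * |_| ≤ γ * c := mul_le_mul_of_nonneg_left (hI1 sa) hγ0
        _ = γ * (1 + 2 * L * (Real.sqrt a₁ + Real.sqrt a₂) / α) * d := by rw [hcdef]; ring
    · rw [pi_norm_le_iff_of_nonneg hγc]
      intro sa
      have he : (rqBellman ε₁ ε₂ ν₁ ν₂ D₁ D₂ ρ γ r₁ r₂ P D₁env D₂env Q
          - rqBellman ε₁ ε₂ ν₁ ν₂ D₁ D₂ ρ γ r₁ r₂ P D₁env D₂env Q').2 sa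
          = γ * ((⨅ Pt : stdSimplex ℝ S,
          (-(∑ s', (Pt : S → ℝ) s' *
              J2 ε₂ ν₂ D₂ (QtoR2 Q s') (ρ (QtoR1 Q s') (QtoR2 Q s'))) + D₂env Pt (P sa)))
        - (⨅ Pt : stdSimplex ℝ S,
          (-(∑ s', (Pt : S → ℝ) s' *
              J2 ε₂ ν₂ D₂ (QtoR2 Q' s') (ρ (QtoR1 Q' s') (QtoR2 Q' s'))) + D₂env Pt (P sa)))) := by
        rw [Prod.snd_sub]
        show (rqBellman ε₁ ε₂ ν₁ ν₂ D₁ D₂ ρ γ r₁ r₂ P D₁env D₂env Q).2 sa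
          - (rqBellman ε₁ ε₂ ν₁ ν₂ D₁ D₂ ρ γ r₁ r₂ P D₁env D₂env Q').2 sa = _
        simp only [rqBellman]
        ring
      rw [Real.norm_eq_abs, he, abs_mul, abs_of_nonneg hγ0]
      calc γ * |_| ≤ γ * c := mul_le_mul_of_nonneg_left (hI2 sa) hγ0
        _ = γ * (1 + 2 * L * (Real.sqrt a₁ + Real.sqrt a₂) / α) * d := by rw [hcdef]; ring
  refine ⟨hmain, ?_, ?_⟩
  · intro hγle Q Q'
    have h := hmain Q Q'
    have hαβ : 0 < α + 2 * L * (Real.sqrt a₁ + Real.sqrt a₂) := by linarith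
    have hprod : γ * (α + 2 * L * (Real.sqrt a₁ + Real.sqrt a₂)) ≤ α :=
      (le_div_iff₀ hαβ).1 hγle
    have heq : γ * (1 + 2 * L * (Real.sqrt a₁ + Real.sqrt a₂) / α)
        = γ * (α + 2 * L * (Real.sqrt a₁ + Real.sqrt a₂)) / α := by
      field_simp
    have hfac : γ * (1 + 2 * L * (Real.sqrt a₁ + Real.sqrt a₂) / α) ≤ 1 := by
      rw [heq, div_le_one hα]
      linarith
    calc ‖rqBellman ε₁ ε₂ ν₁ ν₂ D₁ D₂ ρ γ r₁ r₂ P D₁env D₂env Q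
          - rqBellman ε₁ ε₂ ν₁ ν₂ D₁ D₂ ρ γ r₁ r₂ P D₁env D₂env Q'‖
        ≤ γ * (1 + 2 * L * (Real.sqrt a₁ + Real.sqrt a₂) / α) * ‖Q - Q'‖ := h
      _ ≤ 1 * ‖Q - Q'‖ := mul_le_mul_of_nonneg_right hfac (norm_nonneg _)
      _ = ‖Q - Q'‖ := one_mul _
  · intro hγlt
    refine ⟨γ * (1 + 2 * L * (Real.sqrt a₁ + Real.sqrt a₂) / α),
      mul_nonneg hγ0 hc₀0, ?_, hmain⟩
    have hαβ : 0 < α + 2 * L * (Real.sqrt a₁ + Real.sqrt a₂) := by linarith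
    have hprod : γ * (α + 2 * L * (Real.sqrt a₁ + Real.sqrt a₂)) < α :=
      (lt_div_iff₀ hαβ).1 hγlt
    have heq : γ * (1 + 2 * L * (Real.sqrt a₁ + Real.sqrt a₂) / α)
        = γ * (α + 2 * L * (Real.sqrt a₁ + Real.sqrt a₂)) / α := by
      field_simp
    rw [heq, div_lt_one hα]
    linarith
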